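/- With 1̃_ε the smooth sinusoidal step function, the function q : ℝ → ℝ defined by q(s) = 1̃_ε(s) + s·1̃'_ε(s) satisfies q(s) ≥ 0 for all s ≥ 0, and q(0) = 1/2. Consequently, for linearly independent u, v ∈ ℝ^m, the vector u·q(t−s) + v·q(s−t) is nonzero for all s, t ∈ ℝ. -/

import Mathlib

/-- The smooth sinusoidal step function. -/
noncomputable def smoothStep (ε : ℝ) (s : ℝ) : ℝ :=
  if s ≤ -ε then 0
  else if s ≤ ε then (1 / 2) * Real.sin (Real.pi * s / (2 * ε)) + 1 / 2
  else 1

private lemma smoothStep_formula_hasDerivAt (ε : ℝ) (hε : 0 < ε) (x : ℝ) :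
    HasDerivAt (fun y => (1 / 2) * Real.sin (Real.pi * y / (2 * ε)) + 1 / 2)
      ((Real.pi / (4 * ε)) * Real.cos (Real.pi * x / (2 * ε))) x := by
  have h1 : HasDerivAt (fun y : ℝ => Real.pi * y / (2 * ε)) (Real.pi / (2 * ε)) x := by
    simpa using ((hasDerivAt_id x).const_mul Real.pi).div_const (2 * ε)
  have h2 := (h1.sin.const_mul (1/2 : ℝ)).add_const (1/2 : ℝ)
  refine h2.congr_deriv ?_
  field_simp
  ring

private lemma smoothStep_eq_formula (ε : ℝ) {x : ℝ} (h1 : -ε < x) (h2 : x ≤ ε) :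
    smoothStep ε x = (1 / 2) * Real.sin (Real.pi * x / (2 * ε)) + 1 / 2 := by
  simp [smoothStep, not_le.mpr h1, h2]

private lemma smoothStep_q_ge_half (ε : ℝ) (hε : 0 < ε) (s : ℝ) (hs : 0 ≤ s) :
    1 / 2 ≤ smoothStep ε s + s * deriv (smoothStep ε) s := by
  have hπ := Real.pi_pos
  rcases lt_trichotomy s ε with hlt | heq | hgt
  · -- s ∈ [0, ε)
    have hev : smoothStep ε =ᶠ[nhds s] fun y => (1 / 2) * Real.sin (Real.pi * y / (2 * ε)) + 1 / 2 := by
      filter_upwards [Ioo_mem_nhds (lt_of_lt_of_le (neg_neg_of_pos hε) hs) hlt] with y hy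
      exact smoothStep_eq_formula ε hy.1 hy.2.le
    have hd : deriv (smoothStep ε) s = (Real.pi / (4 * ε)) * Real.cos (Real.pi * s / (2 * ε)) := by
      rw [hev.deriv_eq, (smoothStep_formula_hasDerivAt ε hε s).deriv]
    have hθ0 : 0 ≤ Real.pi * s / (2 * ε) := by positivity
    have hθ1 : Real.pi * s / (2 * ε) ≤ Real.pi / 2 := by
      rw [div_le_div_iff₀ (by positivity) (by norm_num)]
      nlinarith
    have hsin : 0 ≤ Real.sin (Real.pi * s / (2 * ε)) :=
      Real.sin_nonneg_of_nonneg_of_le_pi hθ0 (hθ1.trans (by linarith))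
    have hcos : 0 ≤ Real.cos (Real.pi * s / (2 * ε)) :=
      Real.cos_nonneg_of_mem_Icc ⟨by linarith, hθ1⟩
    rw [hd, smoothStep_eq_formula ε (by linarith) hlt.le]
    have : 0 ≤ s * ((Real.pi / (4 * ε)) * Real.cos (Real.pi * s / (2 * ε))) := by positivity
    linarith
  · -- s = ε
    rw [heq]
    have hval : smoothStep ε ε = 1 := by
      rw [smoothStep_eq_formula ε (by linarith) le_rfl]
      have : Real.pi * ε / (2 * ε) = Real.pi / 2 := by field_simp
      rw [this, Real.sin_pi_div_two]; norm_num
    have hcos0 : (Real.pi / (4 * ε)) * Real.cos (Real.pi * ε / (2 * ε)) = 0 := by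
      have : Real.pi * ε / (2 * ε) = Real.pi / 2 := by field_simp
      rw [this, Real.cos_pi_div_two, mul_zero]
    have h1 : HasDerivWithinAt (smoothStep ε) 0 (Set.Ici ε) ε := by
      have hc : HasDerivWithinAt (fun _ : ℝ => (1 : ℝ)) 0 (Set.Ici ε) ε :=
        (hasDerivWithinAt_const ε _ 1)
      refine hc.congr (fun y hy => ?_) ?_
      · rcases lt_or_eq_of_le (Set.mem_Ici.mp hy) with h | h
        · simp [smoothStep, not_le.mpr (show -ε < y by linarith), not_le.mpr h]
        · rw [← h, hval]
      · rw [hval]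
    have h2 : HasDerivWithinAt (smoothStep ε) 0 (Set.Iic ε) ε := by
      have hf := ((smoothStep_formula_hasDerivAt ε hε ε).hasDerivWithinAt (s := Set.Iic ε))
      rw [hcos0] at hf
      refine hf.congr_of_eventuallyEq ?_ (smoothStep_eq_formula ε (by linarith) le_rfl)
      have hmem : Set.Ioc (-ε) ε ∈ nhdsWithin ε (Set.Iic ε) := by
        rw [← Set.Ioi_inter_Iic]
        exact Filter.inter_mem (mem_nhdsWithin_of_mem_nhds (Ioi_mem_nhds (by linarith)))
          self_mem_nhdsWithin
      filter_upwards [hmem] with y hy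
      exact smoothStep_eq_formula ε hy.1 hy.2
    have hda : HasDerivAt (smoothStep ε) 0 ε := by
      have := h2.union h1
      rw [Set.Iic_union_Ici] at this
      exact this.hasDerivAt Filter.univ_mem
    rw [hda.deriv, hval]
    linarith
  · -- s > ε
    have hev : smoothStep ε =ᶠ[nhds s] fun _ => (1 : ℝ) := by
      filter_upwards [Ioi_mem_nhds hgt] with y hy
      simp [smoothStep, not_le.mpr (lt_trans (by linarith : -ε < ε) hy), not_le.mpr (Set.mem_Ioi.mp hy)]
    have hd : deriv (smoothStep ε) s = 0 := by
      rw [hev.deriv_eq]; exact deriv_const s 1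
    have hval : smoothStep ε s = 1 := by
      simp [smoothStep, not_le.mpr (lt_trans (by linarith : -ε < ε) hgt), not_le.mpr hgt]
    rw [hd, hval]; linarith

theorem smoothStep_q_nonneg_and_jacobian_column_ne_zero {m : ℕ} (ε : ℝ) (hε : 0 < ε) :
    (∀ s : ℝ, 0 ≤ s → 0 ≤ smoothStep ε s + s * deriv (smoothStep ε) s) ∧
    (smoothStep ε 0 + 0 * deriv (smoothStep ε) 0 = 1 / 2) ∧
    (∀ u v : Fin m → ℝ, LinearIndependent ℝ ![u, v] → ∀ s t : ℝ,
      (smoothStep ε (t - s) + (t - s) * deriv (smoothStep ε) (t - s)) • u +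
        (smoothStep ε (s - t) + (s - t) * deriv (smoothStep ε) (s - t)) • v ≠ 0) := by
  refine ⟨fun s hs => le_trans (by norm_num) (smoothStep_q_ge_half ε hε s hs), ?_, ?_⟩
  · rw [smoothStep_eq_formula ε (by linarith) hε.le]
    simp
  · intro u v hli s t hsum
    obtain ⟨h1, h2⟩ := (LinearIndependent.pair_iff.mp hli) _ _ hsum
    rcases le_total s t with h | h
    · have := smoothStep_q_ge_half ε hε (t - s) (by linarith)
      rw [h1] at this; norm_num at this
    · have := smoothStep_q_ge_half ε hε (s - t) (by linarith)
      rw [h2] at this; norm_num at this
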